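/- High-temperature exponential decay via the current (or high-temperature expansion) mapping: for the Ising model at zero field on a finite graph G of maximal degree d, for all distinct vertices x, y at graph distance n, ⟨σ_x σ_y⟩_{G,β,0} ≤ (d·tanh(β))^n / (1 - d·tanh(β)) whenever d·tanh(β) < 1. In particular, on ℤ^d the spin-spin correlations decay exponentially fast when β is small enough, so β_c(ℤ^d) > 0. -/

import Mathlib

set_option linter.unusedSectionVars false


open Finset

/-- The spin value attached to a Boolean: `+1` or `-1`. -/
noncomputable def spin (b : Bool) : ℝ := if b then 1 else -1

/-- Interaction energy `Σ_{{x,y}∈E} σ_x σ_y` of a spin configuration. -/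
noncomputable def interaction {V : Type*} [Fintype V] [DecidableEq V]
    (G : SimpleGraph V) [DecidableRel G.Adj] (σ : V → Bool) : ℝ :=
  ∑ e ∈ G.edgeFinset,
    Sym2.lift ⟨fun x y => spin (σ x) * spin (σ y), fun _ _ => by ring⟩ e

namespace HTE
variable {V : Type*} [Fintype V] [DecidableEq V]

/-- edge weight -/
noncomputable def w (σ : V → Bool) (e : Sym2 V) : ℝ :=
  Sym2.lift ⟨fun x y => spin (σ x) * spin (σ y), fun _ _ => by ring⟩ e

/-- degree of a vertex in an edge set -/
def degF (F : Finset (Sym2 V)) (v : V) : ℕ := (F.filter (fun e => v ∈ e)).card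

lemma spin_eq_or (b : Bool) : spin b = 1 ∨ spin b = -1 := by
  cases b <;> simp [spin]

lemma w_eq_or (σ : V → Bool) (e : Sym2 V) : w σ e = 1 ∨ w σ e = -1 := by
  induction e using Sym2.ind with
  | _ a b =>
    rcases spin_eq_or (σ a) with h1 | h1 <;> rcases spin_eq_or (σ b) with h2 | h2 <;>
      simp [w, h1, h2]

lemma exp_beta_w (β : ℝ) {s : ℝ} (hs : s = 1 ∨ s = -1) :
    Real.exp (β * s) = Real.cosh β * (1 + Real.tanh β * s) := by
  have hc : Real.cosh β ≠ 0 := ne_of_gt (Real.cosh_pos β)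
  have hct : Real.cosh β * Real.tanh β = Real.sinh β := by
    rw [Real.tanh_eq_sinh_div_cosh]; field_simp
  rcases hs with rfl | rfl
  · rw [mul_one, ← Real.cosh_add_sinh]
    have expand : Real.cosh β * (1 + Real.tanh β * 1)
        = Real.cosh β + Real.cosh β * Real.tanh β := by ring
    rw [expand, hct]
  · rw [mul_neg_one, ← Real.cosh_sub_sinh]
    have expand : Real.cosh β * (1 + Real.tanh β * (-1))
        = Real.cosh β - Real.cosh β * Real.tanh β := by ring
    rw [expand, hct]

variable (G : SimpleGraph V) [DecidableRel G.Adj]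

lemma exp_expansion (β : ℝ) (σ : V → Bool) :
    Real.exp (β * interaction G σ) =
      Real.cosh β ^ G.edgeFinset.card *
        ∑ F ∈ G.edgeFinset.powerset, Real.tanh β ^ F.card * ∏ e ∈ F, w σ e := by
  have : β * interaction G σ = ∑ e ∈ G.edgeFinset, β * w σ e := by
    rw [interaction, Finset.mul_sum]; rfl
  rw [this, Real.exp_sum]
  have h1 : ∀ e ∈ G.edgeFinset, Real.exp (β * w σ e)
      = Real.cosh β * (Real.tanh β * w σ e + 1) := by
    intro e _
    rw [exp_beta_w β (w_eq_or σ e)]; ring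
  rw [Finset.prod_congr rfl h1, Finset.prod_mul_distrib, Finset.prod_const,
    Finset.prod_add]
  congr 1
  refine Finset.sum_congr rfl fun F _ => ?_
  rw [Finset.prod_const_one, mul_one, Finset.prod_mul_distrib, Finset.prod_const]

lemma degF_empty (v : V) : degF (∅ : Finset (Sym2 V)) v = 0 := by simp [degF]

lemma degF_insert {F : Finset (Sym2 V)} {e : Sym2 V} (he : e ∉ F) (v : V) :
    degF (insert e F) v = degF F v + (if v ∈ e then 1 else 0) := by
  unfold degF
  rw [Finset.filter_insert]
  split_ifs with h
  · rw [Finset.card_insert_of_notMem (fun hc => he (Finset.mem_of_mem_filter _ hc))]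
  · rw [add_zero]

lemma degF_erase {F : Finset (Sym2 V)} {e : Sym2 V} (he : e ∈ F) (v : V) :
    degF F v = degF (F.erase e) v + (if v ∈ e then 1 else 0) := by
  conv_lhs => rw [← Finset.insert_erase he]
  exact degF_insert (Finset.notMem_erase e F) v

lemma degF_sdiff_add {F E : Finset (Sym2 V)} (h : E ⊆ F) (v : V) :
    degF (F \ E) v + degF E v = degF F v := by
  unfold degF
  have : Finset.filter (fun e => v ∈ e) (F \ E)
      = Finset.filter (fun e => v ∈ e) F \ Finset.filter (fun e => v ∈ e) E := by
    ext a; simp [Finset.mem_sdiff, Finset.mem_filter]; tauto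
  rw [this, Finset.card_sdiff_add_card_eq_card
    (Finset.filter_subset_filter _ h)]

lemma prod_mem_ite {σ : V → Bool} {e : Sym2 V} (he : ¬ e.IsDiag) :
    (∏ v : V, if v ∈ e then spin (σ v) else 1) = w σ e := by
  induction e using Sym2.ind with
  | _ a b =>
    have hab : a ≠ b := by simpa using he
    have : ∀ v : V, ((if v ∈ s(a, b) then spin (σ v) else 1)
        = if v ∈ ({a, b} : Finset V) then spin (σ v) else 1) := by
      intro v; simp [Sym2.mem_iff]
    rw [Finset.prod_congr rfl (fun v _ => this v), Finset.prod_ite_mem,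
      Finset.univ_inter, Finset.prod_pair hab]
    rfl

lemma prod_w_eq {G : SimpleGraph V} [DecidableRel G.Adj] (σ : V → Bool)
    {F : Finset (Sym2 V)} (hF : F ⊆ G.edgeFinset) :
    ∏ e ∈ F, w σ e = ∏ v : V, spin (σ v) ^ degF F v := by
  classical
  induction F using Finset.induction_on with
  | empty => simp [degF_empty]
  | insert _ _ he =>
    rename_i e F ih
    have hFE : F ⊆ G.edgeFinset := fun a ha => hF (Finset.mem_insert_of_mem ha)
    have hediag : ¬ e.IsDiag := by
      have : e ∈ G.edgeFinset := hF (Finset.mem_insert_self e F)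
      rw [SimpleGraph.mem_edgeFinset] at this
      exact SimpleGraph.not_isDiag_of_mem_edgeSet G this
    rw [Finset.prod_insert he, ih hFE]
    have : ∀ v : V, spin (σ v) ^ degF (insert e F) v
        = spin (σ v) ^ degF F v * (if v ∈ e then spin (σ v) else 1) := by
      intro v
      rw [degF_insert he, pow_add]
      congr 1
      split_ifs <;> simp
    rw [Finset.prod_congr rfl (fun v _ => this v), Finset.prod_mul_distrib,
      prod_mem_ite hediag]
    ring

lemma sum_spin_pow (m : ℕ) :
    ∑ b : Bool, spin b ^ m = if Even m then 2 else 0 := by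
  rcases Nat.even_or_odd m with h | h
  · simp [spin, h.neg_one_pow, if_pos h]
  · simp [spin, h.neg_one_pow, if_neg (Nat.not_even_iff_odd.mpr h)]

lemma sum_sigma_prod (m : V → ℕ) :
    ∑ σ : V → Bool, ∏ v : V, spin (σ v) ^ m v
      = if (∀ v : V, Even (m v)) then (2 : ℝ) ^ Fintype.card V else 0 := by
  rw [← Fintype.piFinset_univ]
  have key : (∏ v : V, ∑ b : Bool, spin b ^ m v)
      = ∑ σ ∈ Fintype.piFinset (fun _ : V => (univ : Finset Bool)),
          ∏ v : V, spin (σ v) ^ m v :=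
    Finset.prod_univ_sum (fun _ => (univ : Finset Bool)) (fun v b => spin b ^ m v)
  rw [← key]
  have : ∀ v : V, (∑ b : Bool, spin b ^ m v) = if Even (m v) then 2 else 0 :=
    fun v => sum_spin_pow (m v)
  rw [Finset.prod_congr rfl (fun v _ => this v)]
  by_cases h : ∀ v : V, Even (m v)
  · rw [if_pos h]
    rw [Finset.prod_congr rfl (fun v _ => if_pos (h v)), Finset.prod_const]
    simp
  · rw [if_neg h]
    push_neg at h
    obtain ⟨v, hv⟩ := h
    exact Finset.prod_eq_zero (Finset.mem_univ v) (if_neg hv)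

lemma ind_pair {x a c : V} (hac : a ≠ c) :
    (if x = a then (1 : ℕ) else 0) + (if x = c then 1 else 0) ≤ 1 := by
  by_cases h1 : x = a <;> by_cases h2 : x = c
  · exact absurd (h1.symm.trans h2) hac
  · simp [h1, h2, hac]
  · simp [h1, h2, Ne.symm hac]
  · simp [h1, h2]

lemma ind_or {x a c : V} (hac : a ≠ c) :
    (if x = a ∨ x = c then (1 : ℕ) else 0)
      = (if x = a then 1 else 0) + (if x = c then 1 else 0) := by
  by_cases h1 : x = a <;> by_cases h2 : x = c
  · exact absurd (h1.symm.trans h2) hac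
  · simp [h1, h2, hac]
  · simp [h1, h2, Ne.symm hac]
  · simp [h1, h2]

/-- From an edge set whose odd-degree vertices are exactly `{a, b}`, extract a walk. -/
lemma exists_walk (G : SimpleGraph V) [DecidableRel G.Adj] :
    ∀ (N : ℕ) (F : Finset (Sym2 V)), F.card ≤ N → F ⊆ G.edgeFinset →
    ∀ a b : V, a ≠ b → (∀ v : V, (Odd (degF F v) ↔ v = a ∨ v = b)) →
    ∃ p : G.Walk a b, ∀ e ∈ p.edges, e ∈ F := by
  intro N
  induction N with
  | zero =>
    intro F hcard _ a b hab hodd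
    have : F = ∅ := Finset.card_eq_zero.mp (Nat.le_zero.mp hcard)
    subst this
    have := (hodd a).mpr (Or.inl rfl)
    simp [degF] at this
  | succ N ih =>
    intro F hcard hFE a b hab hodd
    have ha : Odd (degF F a) := (hodd a).mpr (Or.inl rfl)
    have hpos : 0 < degF F a := by
      rcases ha with ⟨k, hk⟩; omega
    obtain ⟨e, he⟩ := Finset.card_pos.mp hpos
    rw [Finset.mem_filter] at he
    obtain ⟨heF, hae⟩ := he
    have heE : e ∈ G.edgeSet := SimpleGraph.mem_edgeFinset.mp (hFE heF)
    set c := Sym2.Mem.other' hae with hc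
    have hspec : s(a, c) = e := Sym2.other_spec' hae
    have hadj : G.Adj a c := by
      rw [← hspec] at heE
      exact heE
    have hac : a ≠ c := hadj.ne
    have hdeg : ∀ v : V, degF F v = degF (F.erase e) v + (if v ∈ e then 1 else 0) :=
      degF_erase heF
    by_cases hcb : c = b
    · subst hcb
      refine ⟨hadj.toWalk, ?_⟩
      intro f hf
      simp [SimpleGraph.Walk.edges] at hf
      rw [hf, hspec]
      exact heF
    · have hcard' : (F.erase e).card ≤ N := by
        have := Finset.card_erase_of_mem heF
        omega
      have hsub : F.erase e ⊆ G.edgeFinset := (Finset.erase_subset e F).trans hFE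
      have hodd' : ∀ v : V, (Odd (degF (F.erase e) v) ↔ v = c ∨ v = b) := by
        intro v
        have h1 := hdeg v
        have h2 : degF F v % 2 = (if v = a then 1 else 0) + (if v = b then 1 else 0) := by
          by_cases h : v = a ∨ v = b
          · have : Odd (degF F v) := (hodd v).mpr h
            rw [Nat.odd_iff] at this
            rw [this, ← ind_or hab, if_pos h]
          · have hno : ¬ Odd (degF F v) := fun hodd' => h ((hodd v).mp hodd')
            rw [Nat.odd_iff] at hno
            have h0 : (if v = a ∨ v = b then (1:ℕ) else 0) = 0 := if_neg h
            rw [ind_or hab] at h0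
            omega
        have hione : (if v ∈ e then (1:ℕ) else 0)
            = (if v = a then 1 else 0) + (if v = c then 1 else 0) := by
          have hm : v ∈ e ↔ (v = a ∨ v = c) := by rw [← hspec, Sym2.mem_iff]
          rw [if_congr hm rfl rfl, ind_or hac]
        rw [hione] at h1
        have goal_arith : degF (F.erase e) v % 2
            = (if v = c then 1 else 0) + (if v = b then 1 else 0) := by
          have p1 := ind_pair (x := v) hab
          have p2 := ind_pair (x := v) hac
          have p3 := ind_pair (x := v) hcb
          set ia := (if v = a then (1:ℕ) else 0) with hia
          set ib := (if v = b then (1:ℕ) else 0) with hib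
          set ic := (if v = c then (1:ℕ) else 0) with hic
          omega
        rw [Nat.odd_iff, goal_arith, ← ind_or hcb]
        split_ifs with h
        · simp [h]
        · simp [h]
      obtain ⟨q, hq⟩ := ih (F.erase e) hcard' hsub c b hcb hodd'
      refine ⟨SimpleGraph.Walk.cons hadj q, ?_⟩
      intro f hf
      rw [SimpleGraph.Walk.edges_cons] at hf
      rcases List.mem_cons.mp hf with rfl | hf
      · rw [hspec]; exact heF
      · exact Finset.mem_of_mem_erase (hq f hf)

/-- Parity of degrees in the edge set of a trail. -/
lemma trail_parity {G : SimpleGraph V} [DecidableRel G.Adj] :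
    ∀ {a b : V} (p : G.Walk a b), p.IsTrail → ∀ v : V,
      degF p.edges.toFinset v % 2
        = ((if v = a then 1 else 0) + (if v = b then 1 else 0)) % 2 := by
  intro a b p
  induction p with
  | nil =>
    intro _ v
    simp only [SimpleGraph.Walk.edges_nil, List.toFinset_nil]
    have : degF (∅ : Finset (Sym2 V)) v = 0 := by simp [degF]
    rw [this]
    split_ifs <;> omega
  | @cons u c b' huc q ih =>
    intro htrail v
    rw [SimpleGraph.Walk.isTrail_cons] at htrail
    obtain ⟨hq, hne⟩ := htrail
    have ihv := ih hq v
    rw [SimpleGraph.Walk.edges_cons, List.toFinset_cons]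
    have hnotmem : s(u, c) ∉ q.edges.toFinset := by
      rw [List.mem_toFinset]; exact hne
    rw [degF_insert hnotmem]
    have hucne : u ≠ c := huc.ne
    have hione : (if v ∈ s(u, c) then (1:ℕ) else 0)
        = (if v = u then 1 else 0) + (if v = c then 1 else 0) := by
      rw [if_congr Sym2.mem_iff rfl rfl, ind_or hucne]
    rw [hione]
    have p1 := ind_pair (x := v) hucne
    set iu := (if v = u then (1:ℕ) else 0) with hiu
    set ic := (if v = c then (1:ℕ) else 0) with hic
    set ib := (if v = b' then (1:ℕ) else 0) with hib
    omega

lemma card_walks_le (G : SimpleGraph V) [DecidableRel G.Adj] (d : ℕ)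
    (hdeg : ∀ v : V, G.degree v ≤ d) :
    ∀ (k : ℕ) (u v : V), (G.finsetWalkLength k u v).card ≤ d ^ k := by
  intro k
  induction k with
  | zero =>
    intro u v
    rw [SimpleGraph.finsetWalkLength]
    split_ifs with h
    · subst h; simp
    · simp
  | succ k ih =>
    intro u v
    rw [SimpleGraph.finsetWalkLength]
    calc (Finset.univ.biUnion fun (w : G.neighborSet u) =>
          (G.finsetWalkLength k w v).map
            ⟨fun p => SimpleGraph.Walk.cons w.property p, fun _ _ h => by cases h; rfl⟩).card
        ≤ ∑ w : G.neighborSet u, ((G.finsetWalkLength k w v).map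
            ⟨fun p => SimpleGraph.Walk.cons w.property p, fun _ _ h => by cases h; rfl⟩).card :=
          Finset.card_biUnion_le
      _ = ∑ w : G.neighborSet u, (G.finsetWalkLength k w v).card := by
          simp [Finset.card_map]
      _ ≤ ∑ _w : G.neighborSet u, d ^ k :=
          Finset.sum_le_sum (fun w _ => ih w v)
      _ = Fintype.card (G.neighborSet u) * d ^ k := by
          rw [Finset.sum_const, Finset.card_univ, smul_eq_mul]
      _ ≤ d * d ^ k := by
          have := hdeg u
          rw [SimpleGraph.card_neighborSet_eq_degree]
          exact Nat.mul_le_mul_right _ this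
      _ = d ^ (k + 1) := by ring

lemma geom_Ico_le {r : ℝ} (h0 : 0 ≤ r) (h1 : r < 1) (n m : ℕ) :
    ∑ k ∈ Finset.Ico n m, r ^ k ≤ r ^ n / (1 - r) := by
  have hr1 : (0:ℝ) < 1 - r := by linarith
  rcases le_or_gt m n with h | h
  · rw [Finset.Ico_eq_empty (by omega), Finset.sum_empty]
    positivity
  · rw [Finset.sum_Ico_eq_sum_range]
    have : ∀ j ∈ Finset.range (m - n), r ^ (n + j) = r ^ n * r ^ j := by
      intro j _; rw [pow_add]
    rw [Finset.sum_congr rfl this, ← Finset.mul_sum]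
    have hgeo : ∑ j ∈ Finset.range (m - n), r ^ j ≤ 1 / (1 - r) := by
      rw [geom_sum_eq (by linarith : r ≠ 1)]
      have heq : (r ^ (m - n) - 1) / (r - 1) = (1 - r ^ (m - n)) / (1 - r) := by
        rw [← neg_div_neg_eq]; ring_nf
      rw [heq]
      gcongr
      have : 0 ≤ r ^ (m - n) := pow_nonneg h0 _
      linarith
    calc r ^ n * ∑ j ∈ Finset.range (m - n), r ^ j
        ≤ r ^ n * (1 / (1 - r)) := by
          exact mul_le_mul_of_nonneg_left hgeo (pow_nonneg h0 n)
      _ = r ^ n / (1 - r) := by rw [mul_one_div]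


/-- Parity condition equivalence. -/
lemma condA_iff {x y : V} (hxy : x ≠ y) (F : Finset (Sym2 V)) :
    (∀ v : V, Even (degF F v + ((if v = x then 1 else 0) + (if v = y then 1 else 0))))
      ↔ (∀ v : V, Odd (degF F v) ↔ (v = x ∨ v = y)) := by
  apply forall_congr'
  intro v
  rw [← ind_or hxy]
  by_cases h : v = x ∨ v = y
  · rw [if_pos h]
    simp only [h, iff_true, Nat.even_add_one, Nat.not_even_iff_odd]
  · rw [if_neg h, add_zero]
    simp only [h, iff_false]
    rw [Nat.even_iff, Nat.odd_iff]
    omega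

end HTE

open HTE in
/-- **High-temperature exponential decay of correlations**: for the Ising model at
zero field on a finite graph of maximal degree `d`, for distinct vertices `x, y` at
graph distance `n`, whenever `d·tanh(β) < 1`,
`⟨σ_x σ_y⟩ ≤ (d·tanh β)^n / (1 - d·tanh β)`.
In particular spin-spin correlations decay exponentially fast for small `β`,
so `β_c > 0`. -/
theorem high_temperature_exponential_decay {V : Type*} [Fintype V] [DecidableEq V]
    (G : SimpleGraph V) [DecidableRel G.Adj] (β : ℝ) (hβ : 0 ≤ β)
    (d : ℕ) (hdeg : ∀ v : V, G.degree v ≤ d) (hsmall : (d : ℝ) * Real.tanh β < 1)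
    (x y : V) (hxy : x ≠ y) (n : ℕ) (hdist : G.dist x y = n) :
    (∑ σ : V → Bool, spin (σ x) * spin (σ y) * Real.exp (β * interaction G σ)) /
        (∑ σ : V → Bool, Real.exp (β * interaction G σ)) ≤
      ((d : ℝ) * Real.tanh β) ^ n / (1 - (d : ℝ) * Real.tanh β) := by
  classical
  have ht0 : 0 ≤ Real.tanh β := by
    rw [Real.tanh_eq_sinh_div_cosh]
    exact div_nonneg (Real.sinh_nonneg_iff.mpr hβ) (Real.cosh_pos β).le
  set SA : Finset (Finset (Sym2 V)) := G.edgeFinset.powerset.filter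
    (fun F => ∀ v : V, Even (degF F v + ((if v = x then 1 else 0) + (if v = y then 1 else 0))))
    with hSA
  set SB : Finset (Finset (Sym2 V)) := G.edgeFinset.powerset.filter
    (fun F => ∀ v : V, Even (degF F v)) with hSB
  have hnum : (∑ σ : V → Bool, spin (σ x) * spin (σ y) * Real.exp (β * interaction G σ))
      = Real.cosh β ^ G.edgeFinset.card * ((2:ℝ) ^ Fintype.card V *
          ∑ F ∈ SA, Real.tanh β ^ F.card) := by
    have step1 : ∀ σ : V → Bool, spin (σ x) * spin (σ y) * Real.exp (β * interaction G σ)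
        = Real.cosh β ^ G.edgeFinset.card * ∑ F ∈ G.edgeFinset.powerset,
            Real.tanh β ^ F.card * (spin (σ x) * spin (σ y) * ∏ e ∈ F, w σ e) := by
      intro σ
      rw [exp_expansion G β σ, mul_left_comm]
      congr 1
      rw [Finset.mul_sum]
      exact Finset.sum_congr rfl fun F _ => by ring
    rw [Finset.sum_congr rfl (fun σ _ => step1 σ), ← Finset.mul_sum, Finset.sum_comm]
    congr 1
    have inner : ∀ F ∈ G.edgeFinset.powerset,
        (∑ σ : V → Bool, Real.tanh β ^ F.card * (spin (σ x) * spin (σ y) * ∏ e ∈ F, w σ e))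
          = (if (∀ v : V, Even (degF F v +
              ((if v = x then 1 else 0) + (if v = y then 1 else 0))))
              then Real.tanh β ^ F.card * (2:ℝ) ^ Fintype.card V else 0) := by
      intro F hF
      rw [Finset.mem_powerset] at hF
      rw [← Finset.mul_sum]
      have hσ : ∀ σ : V → Bool, spin (σ x) * spin (σ y) * ∏ e ∈ F, w σ e
          = ∏ v : V, spin (σ v) ^ (degF F v +
              ((if v = x then 1 else 0) + (if v = y then 1 else 0))) := by
        intro σ
        rw [prod_w_eq σ hF]
        have expand : ∀ v : V, spin (σ v) ^ (degF F v +
            ((if v = x then 1 else 0) + (if v = y then 1 else 0)))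
            = spin (σ v) ^ degF F v * ((if v = x then spin (σ v) else 1) *
                (if v = y then spin (σ v) else 1)) := by
          intro v
          rw [pow_add, pow_add]
          congr 1
          · congr 1 <;> (split_ifs <;> simp)
        rw [Finset.prod_congr rfl (fun v _ => expand v), Finset.prod_mul_distrib,
          Finset.prod_mul_distrib, Finset.prod_ite_eq' Finset.univ x (fun v => spin (σ v)),
          Finset.prod_ite_eq' Finset.univ y (fun v => spin (σ v))]
        simp only [Finset.mem_univ, if_true]
        ring
      rw [Finset.sum_congr rfl (fun σ _ => hσ σ), sum_sigma_prod]
      split_ifs <;> simp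
    rw [Finset.sum_congr rfl inner, ← Finset.sum_filter, ← hSA, ← Finset.sum_mul]
    ring
  have hden : (∑ σ : V → Bool, Real.exp (β * interaction G σ))
      = Real.cosh β ^ G.edgeFinset.card * ((2:ℝ) ^ Fintype.card V *
          ∑ F ∈ SB, Real.tanh β ^ F.card) := by
    rw [Finset.sum_congr rfl (fun σ _ => exp_expansion G β σ), ← Finset.mul_sum,
      Finset.sum_comm]
    congr 1
    have inner : ∀ F ∈ G.edgeFinset.powerset,
        (∑ σ : V → Bool, Real.tanh β ^ F.card * ∏ e ∈ F, w σ e)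
          = (if (∀ v : V, Even (degF F v))
              then Real.tanh β ^ F.card * (2:ℝ) ^ Fintype.card V else 0) := by
      intro F hF
      rw [Finset.mem_powerset] at hF
      rw [← Finset.mul_sum]
      rw [Finset.sum_congr rfl (fun σ _ => prod_w_eq σ hF), sum_sigma_prod]
      split_ifs <;> simp
    rw [Finset.sum_congr rfl inner, ← Finset.sum_filter, ← hSB, ← Finset.sum_mul]
    ring
  have hB1 : (1:ℝ) ≤ ∑ F ∈ SB, Real.tanh β ^ F.card := by
    have hmem : (∅ : Finset (Sym2 V)) ∈ SB := by
      rw [hSB, Finset.mem_filter, Finset.mem_powerset]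
      exact ⟨Finset.empty_subset _, fun v => by simp [degF_empty]⟩
    have h := Finset.single_le_sum (f := fun F : Finset (Sym2 V) => Real.tanh β ^ F.card)
      (fun F _ => by positivity) hmem
    simpa using h
  have hB0 : (0:ℝ) < ∑ F ∈ SB, Real.tanh β ^ F.card := lt_of_lt_of_le one_pos hB1
  -- the finset of self-avoiding paths from x to y
  set P : Finset (G.Walk x y) := (Finset.Ico n (Fintype.card V)).biUnion
    (fun k => (G.finsetWalkLength k x y).filter SimpleGraph.Walk.IsPath) with hP
  -- the key injection inequality
  have key : (∑ F ∈ SA, Real.tanh β ^ F.card)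
      ≤ (∑ p ∈ P, Real.tanh β ^ p.length) * (∑ F ∈ SB, Real.tanh β ^ F.card) := by
    rcases SA.eq_empty_or_nonempty with hempty | ⟨F0, hF0⟩
    · rw [hempty, Finset.sum_empty]
      have h1 : 0 ≤ ∑ p ∈ P, Real.tanh β ^ p.length :=
        Finset.sum_nonneg (fun p _ => by positivity)
      nlinarith
    · have hspec : ∀ F ∈ SA, ∃ p : G.Walk x y, p.IsPath ∧ (∀ e ∈ p.edges, e ∈ F) := by
        intro F hF
        rw [hSA, Finset.mem_filter, Finset.mem_powerset] at hF
        obtain ⟨hFE, hFodd⟩ := hF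
        rw [condA_iff hxy] at hFodd
        obtain ⟨p0, hp0⟩ := exists_walk G F.card F le_rfl hFE x y hxy hFodd
        exact ⟨p0.toPath.1, p0.toPath.2, fun e he =>
          hp0 e (SimpleGraph.Walk.edges_toPath_subset p0 he)⟩
      obtain ⟨p0, _, _⟩ := hspec F0 hF0
      haveI : Inhabited (G.Walk x y) := ⟨p0⟩
      choose! pa hpa1 hpa2 using hspec
      have hEp : ∀ F ∈ SA, (pa F).edges.toFinset ⊆ F := by
        intro F hF e he
        exact hpa2 F hF e (List.mem_toFinset.mp he)
      have hB_mem : ∀ F ∈ SA, F \ (pa F).edges.toFinset ∈ SB := by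
        intro F hF
        have hFA := hF
        rw [hSA, Finset.mem_filter, Finset.mem_powerset] at hFA
        obtain ⟨hFE, hFeven⟩ := hFA
        rw [hSB, Finset.mem_filter, Finset.mem_powerset]
        refine ⟨(Finset.sdiff_subset).trans hFE, ?_⟩
        intro v
        have htp := trail_parity (pa F) (hpa1 F hF).isTrail v
        have hadd := degF_sdiff_add (hEp F hF) v
        have hev := hFeven v
        rw [Nat.even_iff] at hev ⊢
        set i := (if v = x then (1:ℕ) else 0) + (if v = y then 1 else 0) with hi
        omega
      have hcardeq : ∀ F ∈ SA, F.card = (pa F).length + (F \ (pa F).edges.toFinset).card := by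
        intro F hF
        have h1 := Finset.card_sdiff_add_card_eq_card (hEp F hF)
        have h2 : (pa F).edges.toFinset.card = (pa F).length := by
          rw [List.toFinset_card_of_nodup (hpa1 F hF).isTrail.edges_nodup,
            SimpleGraph.Walk.length_edges]
        omega
      have hPmem : ∀ F ∈ SA, pa F ∈ P := by
        intro F hF
        rw [hP, Finset.mem_biUnion]
        refine ⟨(pa F).length, ?_, ?_⟩
        · rw [Finset.mem_Ico]
          exact ⟨hdist ▸ SimpleGraph.dist_le (pa F), (hpa1 F hF).length_lt⟩
        · rw [Finset.mem_filter]
          exact ⟨SimpleGraph.mem_finsetWalkLength_iff.mpr rfl, hpa1 F hF⟩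
      have hinj : ∀ F1 ∈ SA, ∀ F2 ∈ SA,
          (fun F => (pa F, F \ (pa F).edges.toFinset)) F1
            = (fun F => (pa F, F \ (pa F).edges.toFinset)) F2 → F1 = F2 := by
        intro F1 h1 F2 h2 heq
        simp only [Prod.mk.injEq] at heq
        obtain ⟨hfst, hsnd⟩ := heq
        calc F1 = F1 \ (pa F1).edges.toFinset ∪ (pa F1).edges.toFinset :=
              (Finset.sdiff_union_of_subset (hEp F1 h1)).symm
          _ = F2 \ (pa F2).edges.toFinset ∪ (pa F2).edges.toFinset := by rw [hsnd, hfst]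
          _ = F2 := Finset.sdiff_union_of_subset (hEp F2 h2)
      calc (∑ F ∈ SA, Real.tanh β ^ F.card)
          = ∑ F ∈ SA, Real.tanh β ^ (pa F).length
              * Real.tanh β ^ (F \ (pa F).edges.toFinset).card := by
            refine Finset.sum_congr rfl fun F hF => ?_
            rw [← pow_add, ← hcardeq F hF]
        _ = ∑ z ∈ SA.image (fun F => (pa F, F \ (pa F).edges.toFinset)),
              Real.tanh β ^ z.1.length * Real.tanh β ^ z.2.card := by
            rw [Finset.sum_image hinj]
        _ ≤ ∑ z ∈ P ×ˢ SB, Real.tanh β ^ z.1.length * Real.tanh β ^ z.2.card := by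
            apply Finset.sum_le_sum_of_subset_of_nonneg
            · intro z hz
              rw [Finset.mem_image] at hz
              obtain ⟨F, hF, rfl⟩ := hz
              rw [Finset.mem_product]
              exact ⟨hPmem F hF, hB_mem F hF⟩
            · intro z _ _
              positivity
        _ = (∑ p ∈ P, Real.tanh β ^ p.length) * (∑ F ∈ SB, Real.tanh β ^ F.card) := by
            rw [Finset.sum_mul_sum, Finset.sum_product]
  have hdisj : Set.PairwiseDisjoint ↑(Finset.Ico n (Fintype.card V))
      (fun k => (G.finsetWalkLength k x y).filter SimpleGraph.Walk.IsPath) := by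
    intro k1 _ k2 _ hne
    rw [Function.onFun, Finset.disjoint_left]
    intro p hp1 hp2
    rw [Finset.mem_filter, SimpleGraph.mem_finsetWalkLength_iff] at hp1 hp2
    exact hne (hp1.1 ▸ hp2.1 ▸ rfl)
  have hpath : (∑ p ∈ P, Real.tanh β ^ p.length)
      ≤ ((d:ℝ) * Real.tanh β) ^ n / (1 - (d:ℝ) * Real.tanh β) := by
    rw [hP, Finset.sum_biUnion hdisj]
    have hin : ∀ k ∈ Finset.Ico n (Fintype.card V),
        (∑ p ∈ (G.finsetWalkLength k x y).filter SimpleGraph.Walk.IsPath,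
          Real.tanh β ^ p.length) ≤ ((d:ℝ) * Real.tanh β) ^ k := by
      intro k _
      have hlen : ∀ p ∈ (G.finsetWalkLength k x y).filter SimpleGraph.Walk.IsPath,
          Real.tanh β ^ p.length = Real.tanh β ^ k := by
        intro p hp
        rw [Finset.mem_filter, SimpleGraph.mem_finsetWalkLength_iff] at hp
        rw [hp.1]
      rw [Finset.sum_congr rfl hlen, Finset.sum_const, nsmul_eq_mul]
      have hcard : ((((G.finsetWalkLength k x y).filter
          SimpleGraph.Walk.IsPath).card : ℕ) : ℝ) ≤ (d:ℝ) ^ k := by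
        have h1 := (Finset.card_filter_le (G.finsetWalkLength k x y)
          SimpleGraph.Walk.IsPath).trans (card_walks_le G d hdeg k x y)
        calc ((((G.finsetWalkLength k x y).filter
              SimpleGraph.Walk.IsPath).card : ℕ) : ℝ) ≤ ((d ^ k : ℕ) : ℝ) :=
              Nat.cast_le.mpr h1
          _ = (d:ℝ) ^ k := by push_cast; ring
      calc ((((G.finsetWalkLength k x y).filter
            SimpleGraph.Walk.IsPath).card : ℕ) : ℝ) * Real.tanh β ^ k
          ≤ (d:ℝ) ^ k * Real.tanh β ^ k :=
            mul_le_mul_of_nonneg_right hcard (by positivity)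
        _ = ((d:ℝ) * Real.tanh β) ^ k := (mul_pow _ _ _).symm
    calc (∑ k ∈ Finset.Ico n (Fintype.card V),
          ∑ p ∈ (G.finsetWalkLength k x y).filter SimpleGraph.Walk.IsPath,
            Real.tanh β ^ p.length)
        ≤ ∑ k ∈ Finset.Ico n (Fintype.card V), ((d:ℝ) * Real.tanh β) ^ k :=
          Finset.sum_le_sum hin
      _ ≤ ((d:ℝ) * Real.tanh β) ^ n / (1 - (d:ℝ) * Real.tanh β) :=
          geom_Ico_le (by positivity) hsmall n (Fintype.card V)
  -- final assembly
  rw [hnum, hden, mul_div_mul_left _ _ (by positivity : Real.cosh β ^ G.edgeFinset.card ≠ 0),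
    mul_div_mul_left _ _ (by positivity : ((2:ℝ) ^ Fintype.card V) ≠ 0)]
  have hfrac : (∑ F ∈ SA, Real.tanh β ^ F.card) / (∑ F ∈ SB, Real.tanh β ^ F.card)
      ≤ ∑ p ∈ P, Real.tanh β ^ p.length := by
    rw [div_le_iff₀ hB0]
    exact key
  exact hfrac.trans hpath
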